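/- Let Φ be of class 𝒫 with parameters 1 < p < q < ∞ and let c > 0. Then the constant K = ∫₀^∞ max(s^{1/p − 1}, s^{1/q − 1})·e^{−cs} ds is finite, and for every t > 0: ∫₀^∞ (Φ⁻¹(r)/r)·e^{−crt} dr ≤ K·Φ⁻¹(1/t). -/

import Mathlib

open MeasureTheory Set Filter Topology ENNReal

noncomputable section

/-- `Φ` is of class `𝒫` with parameters `1 < p < q < ∞`. -/
def IsClassP (Φ Φinv : ℝ → ℝ) (p q : ℝ) : Prop :=
  1 < p ∧ p < q ∧
  (∀ t : ℝ, 0 < t → 0 < Φ t) ∧ (∀ t : ℝ, 0 < t → 0 < Φinv t) ∧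
  (∀ t : ℝ, 0 < t → Φinv (Φ t) = t) ∧ (∀ t : ℝ, 0 < t → Φ (Φinv t) = t) ∧
  ∃ ρ : ℝ → ℝ, ContinuousOn ρ (Set.Ioi 0) ∧ ConcaveOn ℝ (Set.Ioi 0) ρ ∧
    (∀ t : ℝ, 0 < t → 0 < ρ t) ∧
    (∀ s t : ℝ, 0 < s → 0 < t → ρ (s * t) ≤ max 1 s * ρ t) ∧
    (∀ t : ℝ, 0 < t → Φinv t = t ^ (1/p) * ρ (t ^ (1/q - 1/p)))

/-- Scaling of a lower Lebesgue integral over `(0,∞)`. -/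
lemma lintegral_Ioi_scale (F : ℝ → ℝ≥0∞) (hF : Measurable F) {t : ℝ} (ht : 0 < t) :
    ∫⁻ s in Set.Ioi (0:ℝ), F s = ENNReal.ofReal t * ∫⁻ r in Set.Ioi (0:ℝ), F (r * t) := by
  have ht' : t ≠ 0 := ht.ne'
  have hpre : (fun x : ℝ => x * t) ⁻¹' (Set.Ioi 0) = Set.Ioi 0 := by
    ext x
    simp only [Set.mem_preimage, Set.mem_Ioi]
    constructor
    · intro h
      by_contra hx
      push_neg at hx
      nlinarith
    · intro h; positivity
  calc ∫⁻ s in Set.Ioi (0:ℝ), F s ∂volume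
      = ∫⁻ s in Set.Ioi (0:ℝ), F s
          ∂((ENNReal.ofReal |t| • Measure.map (· * t) volume)) := by
        rw [Real.smul_map_volume_mul_right ht']
    _ = ENNReal.ofReal |t| * ∫⁻ s in Set.Ioi (0:ℝ), F s ∂(Measure.map (· * t) volume) := by
        rw [Measure.restrict_smul, lintegral_smul_measure, smul_eq_mul]
    _ = ENNReal.ofReal t * ∫⁻ r in Set.Ioi (0:ℝ), F (r * t) := by
        rw [abs_of_pos ht]
        congr 1
        rw [Measure.restrict_map (measurable_mul_const t) measurableSet_Ioi, hpre,
          lintegral_map hF (measurable_mul_const t)]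

/-- Key submultiplicativity inequality for `Φ⁻¹` of class `𝒫`. -/
lemma IsClassP.inv_mul_le {Φ Φinv : ℝ → ℝ} {p q : ℝ} (hΦ : IsClassP Φ Φinv p q)
    {u v : ℝ} (hu : 0 < u) (hv : 0 < v) :
    Φinv (u * v) ≤ max (u ^ (1/p)) (u ^ (1/q)) * Φinv v := by
  obtain ⟨hp, hpq, -, -, -, -, ρ, -, -, hρpos, hρmul, hrep⟩ := hΦ
  set e : ℝ := 1/q - 1/p with he
  have h1 : Φinv (u * v) = (u * v) ^ (1/p) * ρ ((u * v) ^ e) := hrep _ (mul_pos hu hv)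
  have h2 : Φinv v = v ^ (1/p) * ρ (v ^ e) := hrep _ hv
  have hmr1 : (u * v) ^ (1/p) = u ^ (1/p) * v ^ (1/p) := Real.mul_rpow hu.le hv.le
  have hmr2 : (u * v) ^ e = u ^ e * v ^ e := Real.mul_rpow hu.le hv.le
  have hρ : ρ (u ^ e * v ^ e) ≤ max 1 (u ^ e) * ρ (v ^ e) :=
    hρmul _ _ (Real.rpow_pos_of_pos hu e) (Real.rpow_pos_of_pos hv e)
  have hfac : u ^ (1/p) * max 1 (u ^ e) = max (u ^ (1/p)) (u ^ (1/q)) := by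
    rw [mul_max_of_nonneg _ _ (Real.rpow_pos_of_pos hu _).le, mul_one,
      ← Real.rpow_add hu]
    congr 2
    ring
  calc Φinv (u * v) = u ^ (1/p) * v ^ (1/p) * ρ (u ^ e * v ^ e) := by
        rw [h1, hmr1, hmr2]
    _ ≤ u ^ (1/p) * v ^ (1/p) * (max 1 (u ^ e) * ρ (v ^ e)) := by
        apply mul_le_mul_of_nonneg_left hρ
        positivity
    _ = (u ^ (1/p) * max 1 (u ^ e)) * (v ^ (1/p) * ρ (v ^ e)) := by ring
    _ = max (u ^ (1/p)) (u ^ (1/q)) * Φinv v := by rw [hfac, h2]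

/-- for `Φ` of class `𝒫` and `c > 0`, the constant
`K = ∫₀^∞ max(s^{1/p−1}, s^{1/q−1})·e^{−cs} ds` is finite and
`∫₀^∞ (Φ⁻¹(r)/r)·e^{−crt} dr ≤ K·Φ⁻¹(1/t)` for every `t > 0`. -/
theorem integral_inv_div_bound
    (Φ Φinv : ℝ → ℝ) (p q : ℝ) (hΦ : IsClassP Φ Φinv p q) (c : ℝ) (hc : 0 < c) :
    (∫⁻ s in Set.Ioi (0:ℝ),
        ENNReal.ofReal (max (s ^ (1/p - 1)) (s ^ (1/q - 1)) * Real.exp (-(c * s)))) < ∞ ∧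
    ∀ t : ℝ, 0 < t →
      (∫⁻ r in Set.Ioi (0:ℝ), ENNReal.ofReal ((Φinv r / r) * Real.exp (-(c * r * t))))
        ≤ (∫⁻ s in Set.Ioi (0:ℝ),
            ENNReal.ofReal (max (s ^ (1/p - 1)) (s ^ (1/q - 1)) * Real.exp (-(c * s)))) *
          ENNReal.ofReal (Φinv (1/t)) := by
  have hp : 1 < p := hΦ.1
  have hq : 1 < q := hp.trans hΦ.2.1
  have hΦinvpos := hΦ.2.2.2.1
  constructor
  · -- finiteness
    have h1 : IntegrableOn (fun s : ℝ => s ^ (1/p - 1) * Real.exp (-c * s ^ (1:ℝ)))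
        (Set.Ioi 0) := integrableOn_rpow_mul_exp_neg_mul_rpow (by
          have : 0 < 1/p := by positivity
          linarith) one_pos hc
    have h2 : IntegrableOn (fun s : ℝ => s ^ (1/q - 1) * Real.exp (-c * s ^ (1:ℝ)))
        (Set.Ioi 0) := integrableOn_rpow_mul_exp_neg_mul_rpow (by
          have : 0 < 1/q := by positivity
          linarith) one_pos hc
    calc (∫⁻ s in Set.Ioi (0:ℝ),
          ENNReal.ofReal (max (s ^ (1/p - 1)) (s ^ (1/q - 1)) * Real.exp (-(c * s))))
        ≤ ∫⁻ s in Set.Ioi (0:ℝ),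
          (ENNReal.ofReal (s ^ (1/p - 1) * Real.exp (-c * s ^ (1:ℝ))) +
           ENNReal.ofReal (s ^ (1/q - 1) * Real.exp (-c * s ^ (1:ℝ)))) := by
          apply setLIntegral_mono' measurableSet_Ioi
          intro s hs
          rw [Set.mem_Ioi] at hs
          rw [← ENNReal.ofReal_add (by positivity) (by positivity)]
          apply ENNReal.ofReal_le_ofReal
          rw [Real.rpow_one]
          have h1 : 0 ≤ s ^ (1/p - 1) := (Real.rpow_pos_of_pos hs _).le
          have h2 : 0 ≤ s ^ (1/q - 1) := (Real.rpow_pos_of_pos hs _).le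
          have he : 0 < Real.exp (-(c*s)) := Real.exp_pos _
          rw [neg_mul, ← add_mul]
          exact mul_le_mul_of_nonneg_right (max_le (by linarith) (by linarith)) he.le
      _ = (∫⁻ s in Set.Ioi (0:ℝ), ENNReal.ofReal (s ^ (1/p - 1) * Real.exp (-c * s ^ (1:ℝ))))
          + ∫⁻ s in Set.Ioi (0:ℝ), ENNReal.ofReal (s ^ (1/q - 1) * Real.exp (-c * s ^ (1:ℝ))) := by
          apply lintegral_add_left'
          apply (h1.aestronglyMeasurable.aemeasurable.ennreal_ofReal)
      _ < ∞ := ENNReal.add_lt_top.2 ⟨h1.setLIntegral_lt_top, h2.setLIntegral_lt_top⟩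
  · -- main bound
    intro t ht
    set C : ℝ := Φinv (1/t) with hC
    have hCpos : 0 < C := hΦinvpos _ (by positivity)
    set G : ℝ → ℝ≥0∞ := fun s =>
      ENNReal.ofReal (max (s ^ (1/p - 1)) (s ^ (1/q - 1)) * Real.exp (-(c * s))) with hG
    have hGmeas : Measurable G := by
      apply Measurable.ennreal_ofReal
      apply Measurable.mul
      · exact (measurable_id.pow measurable_const).max (measurable_id.pow measurable_const)
      · exact (measurable_id.const_mul c).neg.exp
    -- pointwise bound
    have hpt : ∀ r : ℝ, r ∈ Set.Ioi (0:ℝ) →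
        ENNReal.ofReal ((Φinv r / r) * Real.exp (-(c * r * t)))
          ≤ G (r * t) * ENNReal.ofReal (t * C) := by
      intro r hr
      rw [Set.mem_Ioi] at hr
      have hrt : 0 < r * t := mul_pos hr ht
      have hkey : Φinv r ≤ max ((r*t) ^ (1/p)) ((r*t) ^ (1/q)) * C := by
        have := hΦ.inv_mul_le hrt (show (0:ℝ) < 1/t by positivity)
        have hrw : r * t * (1/t) = r := by field_simp
        rwa [hrw] at this
      have hdiv : Φinv r / r ≤ t * max ((r*t) ^ (1/p - 1)) ((r*t) ^ (1/q - 1)) * C := by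
        have hrinv : (0:ℝ) < r⁻¹ := by positivity
        have hstep : Φinv r / r ≤ max ((r*t) ^ (1/p)) ((r*t) ^ (1/q)) * C / r := by
          apply div_le_div_of_nonneg_right hkey hr.le
        refine hstep.trans (le_of_eq ?_)
        have e1 : (r*t) ^ (1/p) = (r*t) ^ (1/p - 1) * (r * t) := by
          rw [← Real.rpow_add_one hrt.ne']; ring_nf
        have e2 : (r*t) ^ (1/q) = (r*t) ^ (1/q - 1) * (r * t) := by
          rw [← Real.rpow_add_one hrt.ne']; ring_nf
        rw [e1, e2, ← max_mul_of_nonneg _ _ hrt.le]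
        field_simp
      have hprod : (Φinv r / r) * Real.exp (-(c * r * t))
          ≤ (max ((r*t) ^ (1/p - 1)) ((r*t) ^ (1/q - 1)) * Real.exp (-(c * (r*t)))) * (t * C) := by
        have hexp : Real.exp (-(c * r * t)) = Real.exp (-(c * (r*t))) := by ring_nf
        rw [hexp]
        calc (Φinv r / r) * Real.exp (-(c * (r*t)))
            ≤ (t * max ((r*t) ^ (1/p - 1)) ((r*t) ^ (1/q - 1)) * C) * Real.exp (-(c * (r*t))) :=
              mul_le_mul_of_nonneg_right hdiv (Real.exp_pos _).le
          _ = (max ((r*t) ^ (1/p - 1)) ((r*t) ^ (1/q - 1)) * Real.exp (-(c * (r*t)))) * (t * C) := by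
              ring
      calc ENNReal.ofReal ((Φinv r / r) * Real.exp (-(c * r * t)))
          ≤ ENNReal.ofReal ((max ((r*t) ^ (1/p - 1)) ((r*t) ^ (1/q - 1)) *
              Real.exp (-(c * (r*t)))) * (t * C)) := ENNReal.ofReal_le_ofReal hprod
        _ = G (r * t) * ENNReal.ofReal (t * C) := by
            rw [ENNReal.ofReal_mul (by positivity)]
    calc (∫⁻ r in Set.Ioi (0:ℝ), ENNReal.ofReal ((Φinv r / r) * Real.exp (-(c * r * t))))
        ≤ ∫⁻ r in Set.Ioi (0:ℝ), G (r * t) * ENNReal.ofReal (t * C) :=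
          setLIntegral_mono' measurableSet_Ioi hpt
      _ = (∫⁻ r in Set.Ioi (0:ℝ), G (r * t)) * ENNReal.ofReal (t * C) :=
          lintegral_mul_const' _ _ ENNReal.ofReal_ne_top
      _ = (∫⁻ s in Set.Ioi (0:ℝ), G s) * ENNReal.ofReal C := by
          rw [lintegral_Ioi_scale G hGmeas ht, ENNReal.ofReal_mul ht.le]
          ring
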